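/- arXiv:1110.3274 — 6 statements merged into one kernel-verified Lean document; each statement's English description precedes it below -/
import Mathlib

section
/- Let x, s, v be complex numbers with x ≠ 0, s² = x² − x³, and v³ = s − x, and set w = (3/2)(x/v + v) − 1. Then 4(w + 1)³ = 27 x w. (Thus k₂(x) is a root of the cubic 4(w+1)³ − 27xw in w.) -/
/-- If `x ≠ 0`, `s² = x² - x³`, `v³ = s - x`, and `w = (3/2)(x/v + v) - 1`,
then `4(w + 1)³ = 27 x w`. -/
theorem stmt_4 (x s v w : ℂ) (hx : x ≠ 0) (hs : s ^ 2 = x ^ 2 - x ^ 3)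
    (hv : v ^ 3 = s - x) (hw : w = 3 / 2 * (x / v + v) - 1) :
    4 * (w + 1) ^ 3 = 27 * x * w := by
  have hv0 : v ≠ 0 := by
    intro h
    apply hx
    have hsx : s = x := by
      have h0 := hv; rw [h] at h0; simp at h0; linear_combination -h0
    have hx3 : x ^ 3 = 0 := by linear_combination hs - hsx * (s + x)
    exact pow_eq_zero_iff (n := 3) (by norm_num) |>.mp hx3
  have h6 : v ^ 6 = -(2 * x * v ^ 3) - x ^ 3 := by
    linear_combination (v ^ 3 + s - x) * hv + hs + 2 * x * hv
  subst hw
  field_simp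
  linear_combination 108 * h6
end

section
/- Let x, s, v be complex numbers with x ≠ 0, s² = x² − x³, and v³ = s − x, and let ζ be any complex number with ζ³ = 1. Then w_ζ = (3/2)(x/(ζv) + ζv) − 1 satisfies 4(w_ζ + 1)³ = 27 x w_ζ. (Thus each of the three cube-root branches of k₃ yields a root of the cubic 4(w+1)³ = 27xw, reflecting the multivaluedness of the inverse.) -/
/-- If `x ≠ 0`, `s² = x² - x³`, `v³ = s - x`, and `ζ³ = 1`, then
`w_ζ = (3/2)(x/(ζv) + ζv) - 1` satisfies `4(w_ζ + 1)³ = 27 x w_ζ`. -/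
theorem stmt_5 (x s v ζ : ℂ) (hx : x ≠ 0) (hs : s ^ 2 = x ^ 2 - x ^ 3)
    (hv : v ^ 3 = s - x) (hζ : ζ ^ 3 = 1) :
    4 * ((3 / 2 * (x / (ζ * v) + ζ * v) - 1) + 1) ^ 3 =
      27 * x * (3 / 2 * (x / (ζ * v) + ζ * v) - 1) := by
  have hζ0 : ζ ≠ 0 := fun h => by simp [h] at hζ
  have hv0 : v ≠ 0 := by
    rintro rfl
    simp at hv
    apply hx
    have h3 : x ^ 3 = 0 := by linear_combination hs - hv.symm * (s + x)
    exact pow_eq_zero_iff (by norm_num) |>.mp h3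
  have hu : (ζ * v) ^ 3 = s - x := by rw [mul_pow, hζ, one_mul, hv]
  field_simp
  linear_combination (108 * ((ζ * v) ^ 3 + s + x)) * hu +
    (108) * hs
end

section
/- Let x, s, v be complex numbers with x ≠ 0, s² = x² − x³, and v³ = s − x, and set w = (3/2)(x/v + v) − 1. Then w ≠ 0 and x = 4(w + 1)³/(27 w). -/
/-- If `x ≠ 0`, `s² = x² - x³`, `v³ = s - x`, and `w = (3/2)(x/v + v) - 1`,
then `w ≠ 0` and `x = 4(w + 1)³ / (27 w)`. -/
theorem stmt_6 (x s v w : ℂ) (hx : x ≠ 0) (hs : s ^ 2 = x ^ 2 - x ^ 3)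
    (hv : v ^ 3 = s - x) (hw : w = 3 / 2 * (x / v + v) - 1) :
    w ≠ 0 ∧ x = 4 * (w + 1) ^ 3 / (27 * w) := by
  have hvne : v ≠ 0 := by
    intro h
    apply hx
    have hsx : s = x := by
      have := hv
      rw [h] at this
      linear_combination -this
    have hx3 : x ^ 3 = 0 := by
      rw [hsx] at hs
      linear_combination hs
    exact pow_eq_zero_iff (n := 3) (by norm_num) |>.mp hx3
  have hkey : v ^ 6 + 2 * x * v ^ 3 + x ^ 3 = 0 := by
    have hsv : s = v ^ 3 + x := by linear_combination -hv
    rw [hsv] at hs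
    linear_combination hs
  have hwv : w * (2 * v) = 3 * (x + v ^ 2) - 2 * v := by
    rw [hw]
    field_simp
  have hwne : w ≠ 0 := by
    intro h
    rw [h, zero_mul] at hwv
    -- 3(x + v²) = 2v
    have h1 : 3 * (x + v ^ 2) = 2 * v := by linear_combination -hwv
    -- from key identity: x * v² * (3x + 3v² - 2v) = (x + v²)³
    have h2 : (x + v ^ 2) ^ 3 = x * v ^ 2 * (3 * (x + v ^ 2) - 2 * v) := by
      linear_combination hkey
    rw [h1] at h2
    simp at h2
    rw [h2] at h1
    simp at h1
    exact hvne h1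
  refine ⟨hwne, ?_⟩
  rw [hw]
  have hden : (2 * v) ^ 3 * (27 * (3 * (x + v * v) - 2 * v)) ≠ 0 := by
    apply mul_ne_zero (pow_ne_zero _ (by simpa using hvne))
    apply mul_ne_zero (by norm_num)
    intro h
    apply hwne
    have : w * (2 * v) = 0 := by rw [hwv]; linear_combination h
    rcases mul_eq_zero.mp this with h' | h'
    · exact h'
    · exact absurd (by simpa using h') hvne
  rw [eq_div_iff (by rw [← hw]; exact mul_ne_zero (by norm_num) hwne)]
  field_simp
  linear_combination (-108) * hkey
end

section
/- Let x be a nonzero complex number and let s, v, w, a, b, y, λ be complex numbers with s² = x² − x³, v³ = s − x, w = (3/2)(x/v + v) − 1, a² = w + 4, b² = w, y = (a − b)/2, and λ = y². Then λ ≠ 0, λ ≠ 1, and 4(1 − λ + λ²)³ = 27 x λ² (1 − λ)². (In other words, λ = (k₁ ∘ k₂)(x)² is a root of the hexic 4(1 − λ + λ²)³ − 27 x λ²(1 − λ)² in λ, which is the paper's claimed verification that k = k₀ ∘ k₁ ∘ k₂ inverts the modular invariant j = 4(1 − λ + λ²)³/(27 λ²(1 − λ)²), expressed as a fractional transformation of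 λ of degree 6.) -/
/-- Composite inversion identity: with `x ≠ 0`, `s² = x² - x³`, `v³ = s - x`,
`w = (3/2)(x/v + v) - 1`, `a² = w + 4`, `b² = w`, `y = (a - b)/2`, `λ = y²`,
one has `λ ≠ 0`, `λ ≠ 1`, and `4(1 - λ + λ²)³ = 27 x λ² (1 - λ)²`. -/
theorem stmt_8 (x s v w a b y l : ℂ) (hx : x ≠ 0)
    (hs : s ^ 2 = x ^ 2 - x ^ 3) (hv : v ^ 3 = s - x)
    (hw : w = 3 / 2 * (x / v + v) - 1)
    (ha : a ^ 2 = w + 4) (hb : b ^ 2 = w) (hy : y = (a - b) / 2)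
    (hl : l = y ^ 2) :
    l ≠ 0 ∧ l ≠ 1 ∧ 4 * (1 - l + l ^ 2) ^ 3 = 27 * x * l ^ 2 * (1 - l) ^ 2 := by
  have hsv : s = v ^ 3 + x := by linear_combination -hv
  -- v ≠ 0
  have hv0 : v ≠ 0 := by
    intro h
    have hx3 : x ^ 3 = 0 := by
      rw [h] at hsv
      simp at hsv
      rw [hsv] at hs
      linear_combination hs
    exact hx (pow_eq_zero_iff (by norm_num) |>.mp hx3)
  -- key identity for v and x
  have hkeyv : v ^ 6 + 2 * x * v ^ 3 + x ^ 3 = 0 := by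
    rw [hsv] at hs
    linear_combination hs
  -- quadratic relation between l and w
  have ha' : a ^ 2 - b ^ 2 = 4 := by rw [ha, hb]; ring
  have hkey : l ^ 2 - l * (w + 2) + 1 = 0 := by
    rw [← hb, hl, hy]
    linear_combination ((a ^ 2 - 4 * a * b + 3 * b ^ 2 - 4) / 16) * ha'
  have hl0 : l ≠ 0 := by
    intro h
    rw [h] at hkey
    simp at hkey
  have hwl : w * l = (l - 1) ^ 2 := by linear_combination -hkey
  have hl1 : l ≠ 1 := by
    intro h
    have hw0 : w = 0 := by
      have := hwl
      rw [h] at this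
      simpa using this
    rw [hw0] at hw
    have h2v : 3 * x + 3 * v ^ 2 - 2 * v = 0 := by
      field_simp at hw
      linear_combination -hw
    have h8 : 8 * v ^ 3 = 0 := by
      linear_combination 27 * hkeyv + (-9 * x ^ 2 + 9 * x * v ^ 2 - 6 * x * v
        - 6 * v ^ 3 - 9 * v ^ 4 - 4 * v ^ 2) * h2v
    have hv3 : v ^ 3 = 0 := by linear_combination h8 / 8
    exact hv0 (pow_eq_zero_iff (by norm_num) |>.mp hv3)
  refine ⟨hl0, hl1, ?_⟩
  -- main identity: reduce to 4*(w+1)^3 = 27*x*w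
  have hmain : 4 * (w + 1) ^ 3 = 27 * x * w := by
    rw [hw]
    field_simp
    linear_combination 108 * hkeyv
  calc 4 * (1 - l + l ^ 2) ^ 3 = 4 * (l * (w + 1)) ^ 3 := by
        rw [show 1 - l + l ^ 2 = l * w + l by linear_combination hkey]; ring
    _ = (4 * (w + 1) ^ 3) * l ^ 3 := by ring
    _ = 27 * x * w * l ^ 3 := by rw [hmain]
    _ = 27 * x * l ^ 2 * (1 - l) ^ 2 := by
        rw [show 27 * x * w * l ^ 3 = 27 * x * l ^ 2 * (w * l) by ring, hwl]; ring
end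

section
/- Let x be a nonzero complex number, and define, using principal branches of complex powers, v = ((x² − x³)^(1/2) − x)^(1/3) and w = (3/2)(x/v + v) − 1. Then v ≠ 0 and 4(w + 1)³ = 27 x w. -/
/-- With principal branches: for `x ≠ 0`, `v = ((x² - x³)^(1/2) - x)^(1/3)`
and `w = (3/2)(x/v + v) - 1` satisfy `v ≠ 0` and `4(w + 1)³ = 27 x w`. -/
theorem stmt_9 (x : ℂ) (hx : x ≠ 0)
    (v : ℂ) (hv : v = ((x ^ 2 - x ^ 3) ^ ((1 : ℂ) / 2) - x) ^ ((1 : ℂ) / 3))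
    (w : ℂ) (hw : w = 3 / 2 * (x / v + v) - 1) :
    v ≠ 0 ∧ 4 * (w + 1) ^ 3 = 27 * x * w := by
  set s : ℂ := (x ^ 2 - x ^ 3) ^ ((1 : ℂ) / 2) with hs
  have hs2 : s ^ 2 = x ^ 2 - x ^ 3 := by
    have := Complex.cpow_nat_inv_pow (x ^ 2 - x ^ 3) (n := 2) two_ne_zero
    rw [hs]; norm_num at this ⊢; exact this
  have hv3 : v ^ 3 = s - x := by
    have := Complex.cpow_nat_inv_pow (s - x) (n := 3) three_ne_zero
    rw [hv]; norm_num at this ⊢; exact this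
  have hvne : v ≠ 0 := by
    intro h
    rw [h] at hv3
    have hsx : s = x := by
      have h0 : (0:ℂ) ^ 3 = s - x := hv3
      simp at h0
      linear_combination -h0
    apply hx
    have hx3 : x ^ 3 = 0 := by
      rw [hsx] at hs2; linear_combination hs2
    exact pow_eq_zero_iff (n := 3) (by norm_num) |>.mp hx3
  have key : v ^ 6 + 2 * x * v ^ 3 + x ^ 3 = 0 := by
    have h6 : v ^ 6 = (v ^ 3) ^ 2 := by ring
    rw [h6, hv3]
    linear_combination hs2
  refine ⟨hvne, ?_⟩
  rw [hw]
  field_simp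
  ring_nf
  linear_combination 108 * key
end

section
/- Let x be a nonzero complex number, and define, using principal branches of complex powers: v = ((x² − x³)^(1/2) − x)^(1/3), w = (3/2)(x/v + v) − 1, y = ((w + 4)^(1/2) − w^(1/2))/2, and λ = y². Then λ ≠ 0, λ ≠ 1, and 4(1 − λ + λ²)³ = 27 x λ² (1 − λ)². -/
/-- With principal branches: for `x ≠ 0`, set `v = ((x² - x³)^(1/2) - x)^(1/3)`,
`w = (3/2)(x/v + v) - 1`, `y = ((w + 4)^(1/2) - w^(1/2))/2`, `λ = y²`. Then
`λ ≠ 0`, `λ ≠ 1`, and `4(1 - λ + λ²)³ = 27 x λ² (1 - λ)²`. -/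
theorem stmt_10 (x : ℂ) (hx : x ≠ 0)
    (v : ℂ) (hv : v = ((x ^ 2 - x ^ 3) ^ ((1 : ℂ) / 2) - x) ^ ((1 : ℂ) / 3))
    (w : ℂ) (hw : w = 3 / 2 * (x / v + v) - 1)
    (y : ℂ) (hy : y = ((w + 4) ^ ((1 : ℂ) / 2) - w ^ ((1 : ℂ) / 2)) / 2)
    (l : ℂ) (hl : l = y ^ 2) :
    l ≠ 0 ∧ l ≠ 1 ∧ 4 * (1 - l + l ^ 2) ^ 3 = 27 * x * l ^ 2 * (1 - l) ^ 2 := by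
  set s : ℂ := (x ^ 2 - x ^ 3) ^ ((1 : ℂ) / 2) with hsdef
  have hs : s ^ 2 = x ^ 2 - x ^ 3 := by
    have := Complex.cpow_nat_inv_pow (x ^ 2 - x ^ 3) (n := 2) (by norm_num)
    rw [hsdef]; norm_num at this ⊢; exact this
  -- s - x ≠ 0
  have hsx : s - x ≠ 0 := by
    intro h
    have hsx' : s = x := by linear_combination h
    have : x ^ 3 = 0 := by
      have := hs
      rw [hsx'] at this
      linear_combination this
    exact hx (pow_eq_zero_iff (by norm_num) |>.mp this)
  have hv3 : v ^ 3 = s - x := by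
    have := Complex.cpow_nat_inv_pow (s - x) (n := 3) (by norm_num)
    rw [hv]; norm_num at this ⊢; exact this
  have hv0 : v ≠ 0 := by
    intro h
    rw [h] at hv3
    exact hsx (by linear_combination -hv3)
  -- u = x / v satisfies u^3 = -(s + x)
  have hu3 : (x / v) ^ 3 = -(s + x) := by
    have hx3 : x ^ 3 = -(s + x) * (s - x) := by linear_combination hs
    field_simp [hv3]
    linear_combination hx3 + (s + x) * hv3
  -- cubic for t = x/v + v :  t^3 = 3*x*t - 2*x
  have huv : (x / v) * v = x := div_mul_cancel₀ x hv0
  have ht : (x / v + v) ^ 3 = 3 * x * (x / v + v) - 2 * x := by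
    have expand : (x / v + v) ^ 3 =
        (x / v) ^ 3 + v ^ 3 + 3 * ((x / v) * v) * (x / v + v) := by ring
    rw [expand, hu3, hv3, huv]; ring
  -- cubic for w :  4*(w+1)^3 = 27*x*w
  have hcubic : 4 * (w + 1) ^ 3 = 27 * x * w := by
    have hwt : w + 1 = 3 / 2 * (x / v + v) := by rw [hw]; ring
    rw [hwt]
    have hwval : w = 3 / 2 * (x / v + v) - 1 := hw
    calc 4 * (3 / 2 * (x / v + v)) ^ 3
        = 27 / 2 * (x / v + v) ^ 3 := by ring
      _ = 27 / 2 * (3 * x * (x / v + v) - 2 * x) := by rw [ht]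
      _ = 27 * x * (3 / 2 * (x / v + v) - 1) := by ring
      _ = 27 * x * w := by rw [← hwval]
  -- square roots
  set a : ℂ := (w + 4) ^ ((1 : ℂ) / 2) with hadef
  set b : ℂ := w ^ ((1 : ℂ) / 2) with hbdef
  have ha : a ^ 2 = w + 4 := by
    have := Complex.cpow_nat_inv_pow (w + 4) (n := 2) (by norm_num)
    rw [hadef]; norm_num at this ⊢; exact this
  have hb : b ^ 2 = w := by
    have := Complex.cpow_nat_inv_pow w (n := 2) (by norm_num)
    rw [hbdef]; norm_num at this ⊢; exact this
  have hy' : y = (a - b) / 2 := hy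
  -- key: l * w = (l - 1)^2
  have hab : a * b = w + 2 - 2 * l := by
    have : 4 * l = a ^ 2 - 2 * (a * b) + b ^ 2 := by
      rw [hl, hy']; ring
    rw [ha, hb] at this
    linear_combination this / 2
  have hkey : l * w = (l - 1) ^ 2 := by
    have h2 : (a * b) ^ 2 = (w + 4) * w := by
      rw [mul_pow, ha, hb]
    rw [hab] at h2
    linear_combination -h2 / 4
  -- l ≠ 0
  have hl0 : l ≠ 0 := by
    intro h
    rw [h] at hab
    have h2 : (a * b) ^ 2 = (w + 4) * w := by rw [mul_pow, ha, hb]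
    rw [hab] at h2
    have h4 : (4 : ℂ) = 0 := by linear_combination h2
    norm_num at h4
  -- w ≠ 0
  have hw0 : w ≠ 0 := by
    intro h
    rw [h] at hcubic
    norm_num at hcubic
  -- l ≠ 1
  have hl1 : l ≠ 1 := by
    intro h
    rw [h] at hkey
    norm_num at hkey
    exact hw0 hkey
  refine ⟨hl0, hl1, ?_⟩
  have hwl : w = (l - 1) ^ 2 / l := by
    field_simp
    linear_combination hkey
  rw [hwl] at hcubic
  field_simp at hcubic
  have key : l * (4 * (1 - l + l ^ 2) ^ 3) = l * (27 * x * l ^ 2 * (1 - l) ^ 2) := by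
    linear_combination l * hcubic
  exact mul_left_cancel₀ hl0 key
end
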